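/- Let g be a symmetric n×n complex matrix of rank at least 2, with g = gR + i·gI, satisfying the cross-reality condition gR a c · gI d b = gR a d · gI c b for all indices a, b, c, d. Then g is real (gI = 0) or g is purely imaginary (gR = 0). -/
import Mathlib


/-- A symmetric `n×n` complex matrix of rank at least 2 satisfying
the cross-reality condition (on its entrywise real and imaginary parts) is
entrywise real or entrywise purely imaginary. -/
theorem cross_reality_rank_ge_two_implies_real_or_imaginary
    (n : ℕ) (g : Matrix (Fin n) (Fin n) ℂ) (hsymm : g.IsSymm)
    (hrank : 2 ≤ g.rank)
    (hcross : ∀ a b c d : Fin n,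
      (g a c).re * (g d b).im = (g a d).re * (g c b).im) :
    (∀ a b : Fin n, (g a b).im = 0) ∨ (∀ a b : Fin n, (g a b).re = 0) := by
  by_contra h
  push_neg at h
  obtain ⟨⟨p, q, hpq⟩, r, s, hrs⟩ := h
  -- w is the r-th row of the real part; w s ≠ 0
  set w : Fin n → ℝ := fun c => (g r c).re with hw
  have hws : w s ≠ 0 := hrs
  have hsym : ∀ a b : Fin n, g a b = g b a := fun a b => hsymm.apply b a
  -- every column of gI is proportional to w
  have hcol : ∀ d b : Fin n, w s * (g d b).im = w d * (g s b).im :=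
    fun d b => hcross r b s d
  -- nonvanishing facts
  have hwp : w p ≠ 0 := by
    intro hc
    apply hpq
    have := hcol p q
    rw [hc, zero_mul] at this
    exact (mul_eq_zero.1 this).resolve_left hws
  have hsq : (g s q).im ≠ 0 := by
    intro hc
    apply hpq
    have := hcol p q
    rw [hc, mul_zero] at this
    exact (mul_eq_zero.1 this).resolve_left hws
  -- every row of gR is proportional to w
  have hrow : ∀ a c : Fin n, (g a c).re * w p = (g a p).re * w c := by
    intro a c
    apply mul_right_cancel₀ (mul_ne_zero hws hsq)
    have h1 := hcross a q c p
    have h2 := hcol p q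
    have h3 := hcol c q
    linear_combination (w s)^2 * h1 - (g a c).re * w s * h2 + (g a p).re * w s * h3
  -- symmetric rank-one structure for the real part
  have hR : ∀ a c : Fin n, (g a c).re * (w p * w p) = (g p p).re * (w a * w c) := by
    intro a c
    have h1 := hrow a c
    have h2 := hrow p a
    have h3 : (g a p).re = (g p a).re := by rw [hsym a p]
    linear_combination w p * h1 + w c * h2 + w p * w c * h3
  -- symmetric rank-one structure for the imaginary part
  have hI : ∀ a b : Fin n, (g a b).im * (w s * w s) = (g s s).im * (w a * w b) := by
    intro a b
    have h1 := hcol a b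
    have h2 := hcol b s
    have h3 : (g s b).im = (g b s).im := by rw [hsym s b]
    linear_combination w s * h1 + w a * h2 + w a * w s * h3
  set lam : ℝ := (g p p).re / (w p * w p) with hlam
  set mu : ℝ := (g s s).im / (w s * w s) with hmu
  have hgab : ∀ a b : Fin n,
      g a b = ((lam : ℂ) + (mu : ℂ) * Complex.I) * (w a : ℂ) * (w b : ℂ) := by
    intro a b
    have hre : (g a b).re = lam * w a * w b := by
      rw [hlam]
      field_simp
      linear_combination hR a b
    have him : (g a b).im = mu * w a * w b := by
      rw [hmu]
      field_simp
      linear_combination hI a b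
    apply Complex.ext <;> simp [hre, him]
  -- hence g has rank at most 1
  set u : Fin n → ℂ := fun a => (w a : ℂ) with hu
  have hrange : LinearMap.range g.mulVecLin ≤ Submodule.span ℂ {u} := by
    rintro y ⟨x, rfl⟩
    refine Submodule.mem_span_singleton.2
      ⟨((lam : ℂ) + (mu : ℂ) * Complex.I) * ∑ b, (w b : ℂ) * x b, ?_⟩
    funext a
    simp only [Matrix.mulVecLin_apply, Matrix.mulVec, dotProduct, Pi.smul_apply,
      smul_eq_mul, hu]
    rw [Finset.mul_sum, Finset.sum_mul]
    apply Finset.sum_congr rfl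
    intro b _
    rw [hgab a b]
    ring
  have hle : g.rank ≤ 1 := by
    have h1 : g.rank ≤ Module.finrank ℂ (Submodule.span ℂ ({u} : Set (Fin n → ℂ))) :=
      Submodule.finrank_mono hrange
    have h2 : Module.finrank ℂ (Submodule.span ℂ ({u} : Set (Fin n → ℂ))) ≤ 1 := by
      by_cases hu0 : u = 0
      · rw [show ({u} : Set (Fin n → ℂ)) = {0} by rw [hu0], Submodule.span_zero_singleton]
        simp
      · rw [finrank_span_singleton hu0]
    exact h1.trans h2
  omega
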